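/- Let X ⊆ ℝ^{d_x} be nonempty, convex, and closed, and let Y ⊆ ℝ^{d_y} be nonempty, convex, and compact with diameter at most D_y > 0; fix y₀ ∈ Y, δ > 0, ε > 0, L > 0. Suppose f : ℝ^{d_x} × ℝ^{d_y} → ℝ satisfies |f(x₁,y₁) − f(x₂,y₂)| ≤ L·(‖x₁−x₂‖² + ‖y₁−y₂‖²)^{1/2} for all x₁,x₂ ∈ ℝ^{d_x} and y₁,y₂ ∈ Y. Define Φ(x) = max_{y∈Y} f(x,y), Φ̃(x) = max_{y∈Y} ( f(x,y) − (δε/(2 d_x D_y²))‖y − y₀‖² ), and their uniform-ball smoothings Φ_δ(x) = E_{w ~ Unif(B^{d_x}(0,1))}[Φ(x + δw)] and Φ̃_δ(x) = E_{w ~ Unif(B^{d_x}(0,1))}[Φ̃(x + δw)]. Then Φ_δ and Φ̃_δ are differentiable, and for all x ∈ X and all η > 0: ‖G_X(x, ∇Φ_δ(x), η) − G_X(x, ∇Φ̃_δ(x), η)‖ ≤ ε/2, where G_X(x, g, η) = (x − Π_X(x − η g))/η. -/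

import Mathlib

open MeasureTheory Metric Set Pointwise
open scoped NNReal ENNReal

noncomputable section

abbrev Euc (n : ℕ) := EuclideanSpace ℝ (Fin n)

/-- The uniform probability distribution on the closed unit ball of `ℝ^n`. -/
def unifBall (n : ℕ) : Measure (Euc n) :=
  (volume (closedBall (0 : Euc n) 1))⁻¹ • volume.restrict (closedBall (0 : Euc n) 1)

/-- The primal function `Φ(x) = max_{y∈Y} f(x,y)`. -/
def primal {dx dy : ℕ} (Y : Set (Euc dy)) (f : Euc dx → Euc dy → ℝ) (x : Euc dx) : ℝ :=
  sSup (f x '' Y)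

/-- The uniform-ball smoothing `Φ_δ(x) = E_{w ~ Unif(B^{d_x}(0,1))}[Φ(x + δw)]`. -/
def ballSmooth (n : ℕ) (δ : ℝ) (h : Euc n → ℝ) (x : Euc n) : ℝ :=
  ∫ w : Euc n, h (x + δ • w) ∂(unifBall n)

/-- Gradient mapping `G_X(x, g, η) = (x − Π_X(x − ηg))/η`. -/
def gradMapX {n : ℕ} (projX : Euc n → Euc n) (x g : Euc n) (η : ℝ) : Euc n :=
  η⁻¹ • (x - projX (x - η • g))

lemma euc_finrank {n : ℕ} : Module.finrank ℝ (Euc n) = n := by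
  simp [finrank_euclideanSpace]

lemma vball_pos {n : ℕ} (hn : 0 < n) : 0 < volume (closedBall (0 : Euc n) 1) := by
  haveI : Nontrivial (Euc n) := by
    apply Module.nontrivial_of_finrank_pos (R := ℝ) (M := Euc n)
    rw [euc_finrank]; exact hn
  exact measure_closedBall_pos volume 0 one_pos

lemma vball_ne_top {n : ℕ} : volume (closedBall (0 : Euc n) 1) ≠ ⊤ :=
  (measure_closedBall_lt_top).ne

lemma ballSmooth_dist_le {n : ℕ} (hn : 0 < n) {δ : ℝ} (hδ : 0 < δ)
    {h : Euc n → ℝ} (hcont : Continuous h) {M : ℝ} (hM : 0 ≤ M) (hb : ∀ z, |h z| ≤ M)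
    (x₁ x₂ : Euc n) :
    |ballSmooth n δ h x₁ - ballSmooth n δ h x₂| ≤ n * M / δ * ‖x₁ - x₂‖ := by
  set ν : Measure (Euc n) := volume with hν
  set B : Set (Euc n) := closedBall 0 1 with hB
  have hBmeas : MeasurableSet B := measurableSet_closedBall
  have hVpos := vball_pos hn
  have hVtop : ν B ≠ ⊤ := vball_ne_top
  set VB : ℝ := (ν B).toReal with hVB
  have hVBpos : 0 < VB := ENNReal.toReal_pos hVpos.ne' hVtop
  set c : ℝ := ((ν B)⁻¹).toReal with hcdef
  have hcVB : c * VB = 1 := by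
    rw [hcdef, hVB, ← ENNReal.toReal_mul, ENNReal.inv_mul_cancel hVpos.ne' hVtop,
      ENNReal.toReal_one]
  have hbs : ∀ x : Euc n, ballSmooth n δ h x = c • ∫ w in B, h (x + δ • w) ∂ν := by
    intro x
    rw [ballSmooth, unifBall, integral_smul_measure]
  set t : Euc n := δ⁻¹ • (x₂ - x₁) with ht
  set φ : Euc n → ℝ := fun v => h (x₁ + δ • v) with hφ
  have hφc : Continuous φ := by fun_prop
  have hφb : ∀ v, |φ v| ≤ M := fun v => hb _
  set B' : Set (Euc n) := closedBall t 1 with hB'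
  have hB'meas : MeasurableSet B' := measurableSet_closedBall
  -- translation step
  have key : ∫ w in B, h (x₂ + δ • w) ∂ν = ∫ v in B', φ v ∂ν := by
    have harg : ∀ w, h (x₂ + δ • w) = φ (w + t) := by
      intro w
      simp only [hφ]
      congr 1
      rw [smul_add, smul_smul, mul_inv_cancel₀ hδ.ne', one_smul]
      abel
    have hind : ∀ w, B.indicator (fun w => φ (w + t)) w = B'.indicator φ (w + t) := by
      intro w
      have hmem : w + t ∈ B' ↔ w ∈ B := by
        rw [hB', hB]
        simp [mem_closedBall, dist_eq_norm, add_sub_cancel_right]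
      by_cases hw : w ∈ B
      · rw [indicator_of_mem hw, indicator_of_mem (hmem.mpr hw)]
      · rw [indicator_of_notMem hw, indicator_of_notMem (fun hc => hw (hmem.mp hc))]
    calc ∫ w in B, h (x₂ + δ • w) ∂ν = ∫ w, B.indicator (fun w => φ (w + t)) w ∂ν := by
          simp_rw [harg]; rw [← integral_indicator hBmeas]
      _ = ∫ w, B'.indicator φ (w + t) ∂ν := by simp_rw [hind]
      _ = ∫ v, B'.indicator φ v ∂ν := by
          exact integral_add_right_eq_self (fun v => B'.indicator φ v) t
      _ = _ := integral_indicator hB'meas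
  -- integrability
  have hint : ∀ S : Set (Euc n), MeasurableSet S → ν S ≠ ⊤ → IntegrableOn φ S ν := by
    intro S hSm hSfin
    apply Measure.integrableOn_of_bounded hSfin (hφc.aestronglyMeasurable)
    filter_upwards with v using (by simpa [Real.norm_eq_abs] using hφb v)
  -- decomposition
  have hfin : ∀ S : Set (Euc n), S ⊆ B ∪ B' → ν S ≠ ⊤ := by
    intro S hS
    exact ((measure_mono hS).trans_lt ((measure_union_le _ _).trans_lt
      (by rw [hB']; exact ENNReal.add_lt_top.mpr ⟨hVtop.lt_top, measure_closedBall_lt_top⟩))).ne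
  have hdecomp : (∫ v in B, φ v ∂ν) - ∫ v in B', φ v ∂ν
      = (∫ v in B \ B', φ v ∂ν) - ∫ v in B' \ B, φ v ∂ν := by
    have h1 : (∫ v in B, φ v ∂ν) = (∫ v in B \ B', φ v ∂ν) + ∫ v in B ∩ B', φ v ∂ν := by
      rw [← setIntegral_union (Set.disjoint_of_subset_right Set.inter_subset_right
        disjoint_sdiff_left) (hBmeas.inter hB'meas)
        (hint _ (hBmeas.diff hB'meas) (hfin _ (Set.diff_subset.trans Set.subset_union_left)))
        (hint _ (hBmeas.inter hB'meas) (hfin _ (Set.inter_subset_left.trans Set.subset_union_left))),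
        Set.diff_union_inter]
    have h2 : (∫ v in B', φ v ∂ν) = (∫ v in B' \ B, φ v ∂ν) + ∫ v in B' ∩ B, φ v ∂ν := by
      rw [← setIntegral_union (Set.disjoint_of_subset_right Set.inter_subset_right
        disjoint_sdiff_left) (hB'meas.inter hBmeas)
        (hint _ (hB'meas.diff hBmeas) (hfin _ (Set.diff_subset.trans Set.subset_union_right)))
        (hint _ (hB'meas.inter hBmeas) (hfin _ (Set.inter_subset_left.trans Set.subset_union_right))),
        Set.diff_union_inter]
    rw [h1, h2, Set.inter_comm B' B]
    ring
  have habs : |(∫ v in B, φ v ∂ν) - ∫ v in B', φ v ∂ν|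
      ≤ M * (ν (B \ B')).toReal + M * (ν (B' \ B)).toReal := by
    rw [hdecomp]
    refine (abs_sub _ _).trans (add_le_add ?_ ?_) <;>
    · refine norm_setIntegral_le_of_norm_le_const (E := ℝ) ?_ ?_
      · exact (hfin _ (by intro v hv; first
          | exact Or.inl (Set.diff_subset hv) | exact Or.inr (Set.diff_subset hv))).lt_top
      · intro v _; simpa [Real.norm_eq_abs] using hφb v
  -- measure estimate
  have hmeas_est : M * (ν (B \ B')).toReal + M * (ν (B' \ B)).toReal ≤ M * VB * n * ‖t‖ := by
    have hνB' : ν B' = ν B := by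
      rw [hB', hB, hν, Measure.addHaar_closedBall' _ _ (zero_le_one)]
      simp
    rcases le_or_gt ‖t‖ 2 with hs2 | hs2
    · set r : ℝ := 1 - ‖t‖ / 2 with hr
      have hr0 : 0 ≤ r := by rw [hr]; linarith
      set C : Set (Euc n) := closedBall ((2⁻¹ : ℝ) • t) r with hC
      have hCmeas : MeasurableSet C := measurableSet_closedBall
      have hCtop : ν C ≠ ⊤ := measure_closedBall_lt_top.ne
      have hhalf : ‖(2⁻¹ : ℝ) • t‖ = ‖t‖ / 2 := by
        rw [norm_smul, Real.norm_eq_abs]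
        rw [abs_of_pos (by norm_num : (0:ℝ) < 2⁻¹)]
        ring
      have hCB : C ⊆ B := by
        intro v hv
        rw [hC, mem_closedBall, dist_eq_norm] at hv
        rw [hB, mem_closedBall, dist_zero_right]
        calc ‖v‖ = ‖(v - (2⁻¹:ℝ) • t) + (2⁻¹:ℝ) • t‖ := by rw [sub_add_cancel]
          _ ≤ ‖v - (2⁻¹:ℝ) • t‖ + ‖(2⁻¹:ℝ) • t‖ := norm_add_le _ _
          _ ≤ r + ‖t‖ / 2 := by rw [hhalf]; exact add_le_add hv le_rfl
          _ = 1 := by rw [hr]; ring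
      have hCB' : C ⊆ B' := by
        intro v hv
        rw [hC, mem_closedBall, dist_eq_norm] at hv
        rw [hB', mem_closedBall, dist_eq_norm]
        have hsplit : v - t = (v - (2⁻¹:ℝ) • t) + (-((2⁻¹:ℝ) • t)) := by module
        calc ‖v - t‖ ≤ ‖v - (2⁻¹:ℝ) • t‖ + ‖-((2⁻¹:ℝ) • t)‖ := by
              rw [hsplit]; exact norm_add_le _ _
          _ ≤ r + ‖t‖ / 2 := by
              rw [norm_neg, hhalf]; exact add_le_add hv le_rfl
          _ = 1 := by rw [hr]; ring
      have hνC : (ν C).toReal = r ^ n * VB := by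
        rw [hC, hν, Measure.addHaar_closedBall' _ _ hr0, euc_finrank,
          ENNReal.toReal_mul, ENNReal.toReal_ofReal (by positivity)]
      have hd : ∀ S : Set (Euc n), ν S = ν B → C ⊆ S →
          (ν (S \ C)).toReal = VB - r ^ n * VB := by
        intro S hS hCS
        rw [measure_diff hCS hCmeas.nullMeasurableSet hCtop, hS,
          ENNReal.toReal_sub_of_le (hS ▸ (measure_mono hCS)) hVtop, hνC]
      have hd1 : (ν (B \ B')).toReal ≤ VB - r ^ n * VB := by
        rw [← hd B rfl hCB]
        exact ENNReal.toReal_mono ((measure_mono Set.diff_subset).trans_lt hVtop.lt_top).ne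
          (measure_mono (Set.diff_subset_diff_right hCB'))
      have hd2 : (ν (B' \ B)).toReal ≤ VB - r ^ n * VB := by
        rw [← hd B' hνB' hCB']
        exact ENNReal.toReal_mono ((measure_mono Set.diff_subset).trans_lt
          (hνB' ▸ hVtop.lt_top)).ne (measure_mono (Set.diff_subset_diff_right hCB))
      have hbern : 1 - r ^ n ≤ n * (‖t‖ / 2) := by
        have hB1 := one_add_mul_le_pow (a := -(‖t‖ / 2)) (by linarith) n
        have h1 : (1 + -(‖t‖/2)) = r := by rw [hr]; ring
        rw [h1] at hB1
        linarith
      calc M * (ν (B \ B')).toReal + M * (ν (B' \ B)).toReal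
          ≤ M * (VB - r ^ n * VB) + M * (VB - r ^ n * VB) :=
            add_le_add (mul_le_mul_of_nonneg_left hd1 hM) (mul_le_mul_of_nonneg_left hd2 hM)
        _ = 2 * M * (VB * (1 - r ^ n)) := by ring
        _ ≤ 2 * M * (VB * (n * (‖t‖ / 2))) := by
            apply mul_le_mul_of_nonneg_left _ (by linarith)
            exact mul_le_mul_of_nonneg_left hbern hVBpos.le
        _ = M * VB * n * ‖t‖ := by ring
    · have hn1 : (1:ℝ) ≤ (n:ℝ) := by exact_mod_cast hn
      have h2n : (2 : ℝ) ≤ n * ‖t‖ := by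
        calc (2:ℝ) ≤ ‖t‖ := hs2.le
          _ = 1 * ‖t‖ := (one_mul _).symm
          _ ≤ n * ‖t‖ := mul_le_mul_of_nonneg_right hn1 (norm_nonneg _)
      have hd1 : (ν (B \ B')).toReal ≤ VB :=
        ENNReal.toReal_mono hVtop (measure_mono Set.diff_subset)
      have hd2 : (ν (B' \ B)).toReal ≤ VB := by
        rw [hVB, ← hνB']
        exact ENNReal.toReal_mono (hνB' ▸ hVtop) (measure_mono Set.diff_subset)
      have hMVB : 0 ≤ M * VB := mul_nonneg hM hVBpos.le
      calc M * (ν (B \ B')).toReal + M * (ν (B' \ B)).toReal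
          ≤ M * VB + M * VB :=
            add_le_add (mul_le_mul_of_nonneg_left hd1 hM) (mul_le_mul_of_nonneg_left hd2 hM)
        _ = M * VB * 2 := by ring
        _ ≤ M * VB * (n * ‖t‖) := mul_le_mul_of_nonneg_left h2n hMVB
        _ = M * VB * n * ‖t‖ := by ring
  -- conclusion
  have hnormt : ‖t‖ = ‖x₁ - x₂‖ / δ := by
    rw [ht, norm_smul, Real.norm_eq_abs, abs_of_pos (inv_pos.mpr hδ), norm_sub_rev]
    ring
  have hc0 : 0 ≤ c := ENNReal.toReal_nonneg
  calc |ballSmooth n δ h x₁ - ballSmooth n δ h x₂|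
      = |c| * |(∫ v in B, φ v ∂ν) - ∫ v in B', φ v ∂ν| := by
        rw [hbs, hbs, key, smul_eq_mul, smul_eq_mul, ← mul_sub, abs_mul]
    _ ≤ c * (M * VB * n * ‖t‖) := by
        rw [abs_of_nonneg hc0]
        exact mul_le_mul_of_nonneg_left (habs.trans hmeas_est) hc0
    _ = (c * VB) * (M * n * ‖t‖) := by ring
    _ = M * n * (‖x₁ - x₂‖ / δ) := by rw [hcVB, hnormt, one_mul]
    _ = n * M / δ * ‖x₁ - x₂‖ := by ring

instance unifBall_finite {n : ℕ} : IsFiniteMeasure (unifBall n) := by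
  constructor
  rw [unifBall]
  simp only [Measure.smul_apply, smul_eq_mul, Measure.restrict_apply MeasurableSet.univ,
    Set.univ_inter]
  exact lt_of_le_of_lt (ENNReal.inv_mul_le_one _) ENNReal.one_lt_top

lemma unifBall_ac {n : ℕ} {p : Euc n → Prop}
    (h : ∀ᵐ z ∂(volume : Measure (Euc n)), p z) : ∀ᵐ z ∂(unifBall n), p z := by
  rw [unifBall]
  exact Measure.ae_smul_measure (ae_restrict_of_ae h) _

lemma ballSmooth_hasFDerivAt {n : ℕ} (hn : 0 < n) {δ : ℝ} (hδ : 0 < δ)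
    {h : Euc n → ℝ} {K : ℝ≥0} (hlip : LipschitzWith K h) (x₀ : Euc n) :
    HasFDerivAt (ballSmooth n δ h)
      (∫ w, fderiv ℝ h (x₀ + δ • w) ∂(unifBall n)) x₀ := by
  set μ := unifBall n with hμ
  set F' : Euc n → (Euc n →L[ℝ] ℝ) := fun w => fderiv ℝ h (x₀ + δ • w) with hF'
  have haff : ∀ x : Euc n, Continuous (fun w : Euc n => x + δ • w) := by
    intro x; fun_prop
  have hF_meas : ∀ᶠ x in nhds x₀, AEStronglyMeasurable (fun w => h (x + δ • w)) μ :=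
    Filter.Eventually.of_forall fun x =>
      ((hlip.continuous.comp (haff x)).aestronglyMeasurable)
  have hF_int : Integrable (fun w => h (x₀ + δ • w)) μ := by
    rw [hμ, unifBall]
    refine Integrable.smul_measure ?_ (ENNReal.inv_ne_top.mpr (vball_pos hn).ne')
    exact ((hlip.continuous.comp (haff x₀)).continuousOn).integrableOn_compact
      (isCompact_closedBall 0 1)
  have hF'_meas : AEStronglyMeasurable F' μ := by
    have : Measurable F' := (measurable_fderiv ℝ h).comp (by fun_prop)
    exact this.aestronglyMeasurable
  have h_lip : ∀ᵐ w ∂μ, LipschitzOnWith (Real.nnabs ((K : ℝ)))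
      (fun x => h (x + δ • w)) (ball x₀ 1) := by
    refine Filter.Eventually.of_forall fun w => ?_
    have : LipschitzWith K (fun x : Euc n => h (x + δ • w)) := by
      intro a b
      simpa [edist_add_right] using hlip (a + δ • w) (b + δ • w)
    rw [Real.nnabs_coe]
    intro a _ b _
    exact this a b
  have bound_int : Integrable (fun _ : Euc n => (K : ℝ)) μ := integrable_const _
  have h_diff : ∀ᵐ w ∂μ, HasFDerivAt (fun x => h (x + δ • w)) (F' w) x₀ := by
    have hae : ∀ᵐ w ∂μ, DifferentiableAt ℝ h (x₀ + δ • w) := by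
      apply unifBall_ac
      have h1 : ∀ᵐ z ∂(volume : Measure (Euc n)), DifferentiableAt ℝ h z :=
        hlip.ae_differentiableAt
      rw [ae_iff] at h1 ⊢
      set N : Set (Euc n) := {z | ¬DifferentiableAt ℝ h z} with hN
      have hpre : {w : Euc n | ¬DifferentiableAt ℝ h (x₀ + δ • w)}
          = δ⁻¹ • ((-x₀) +ᵥ N) := by
        ext w
        rw [Set.mem_smul_set_iff_inv_smul_mem₀ (inv_ne_zero hδ.ne'), inv_inv,
          Set.mem_vadd_set_iff_neg_vadd_mem]
        simp [hN, vadd_eq_add]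
      rw [hpre, Measure.addHaar_smul, measure_vadd, h1, mul_zero]
    filter_upwards [hae] with w hw
    have h2 : HasFDerivAt (fun x : Euc n => x + δ • w)
        (ContinuousLinearMap.id ℝ (Euc n)) x₀ := (hasFDerivAt_id x₀).add_const (δ • w)
    have h3 := hw.hasFDerivAt.comp x₀ h2
    simpa [hF', Function.comp_def] using h3
  exact (hasFDerivAt_integral_of_dominated_loc_of_lip (ball_mem_nhds x₀ one_pos) hF_meas hF_int hF'_meas
    h_lip bound_int h_diff).2

lemma primal_le_primal_add {dy dx : ℕ} {Y : Set (Euc dy)} (hYne : Y.Nonempty)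
    {g₁ g₂ : Euc dx → Euc dy → ℝ} {x₁ x₂ : Euc dx} (hb₂ : BddAbove (g₂ x₂ '' Y)) {K : ℝ}
    (hle : ∀ y ∈ Y, g₁ x₁ y ≤ g₂ x₂ y + K) : primal Y g₁ x₁ ≤ primal Y g₂ x₂ + K := by
  apply csSup_le (hYne.image _)
  rintro a ⟨y, hy, rfl⟩
  exact (hle y hy).trans (add_le_add (le_csSup hb₂ (Set.mem_image_of_mem _ hy)) le_rfl)

-- nonexpansiveness of the metric projection
lemma proj_nonexpansive {n : ℕ} {X : Set (Euc n)} (hXconv : Convex ℝ X)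
    (projX : Euc n → Euc n)
    (hprojX : ∀ z, projX z ∈ X ∧ ∀ w ∈ X, ‖z - projX z‖ ≤ ‖z - w‖)
    (z₁ z₂ : Euc n) : ‖projX z₁ - projX z₂‖ ≤ ‖z₁ - z₂‖ := by
  have hXne : X.Nonempty := ⟨projX z₁, (hprojX z₁).1⟩
  haveI : Nonempty X := hXne.to_subtype
  have hvar : ∀ z, ∀ w ∈ X, inner (𝕜 := ℝ) (z - projX z) (w - projX z) ≤ (0:ℝ) := by
    intro z
    rw [← norm_eq_iInf_iff_real_inner_le_zero hXconv (hprojX z).1]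
    apply le_antisymm
    · apply le_ciInf
      intro w
      exact (hprojX z).2 w w.2
    · exact ciInf_le ⟨0, fun _ ⟨_, h⟩ => h ▸ norm_nonneg _⟩ (⟨projX z, (hprojX z).1⟩ : X)
  set p₁ := projX z₁
  set p₂ := projX z₂
  have h1 : inner (𝕜 := ℝ) (z₁ - p₁) (p₂ - p₁) ≤ (0:ℝ) := hvar z₁ p₂ (hprojX z₂).1
  have h2 : inner (𝕜 := ℝ) (z₂ - p₂) (p₁ - p₂) ≤ (0:ℝ) := hvar z₂ p₁ (hprojX z₁).1
  have key : ‖p₁ - p₂‖ ^ 2 ≤ inner (𝕜 := ℝ) (z₁ - z₂) (p₁ - p₂) := by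
    have hsum : inner (𝕜 := ℝ) ((z₁ - z₂) - (p₁ - p₂)) (p₁ - p₂) ≥ (0:ℝ) := by
      have hrw : (z₁ - z₂) - (p₁ - p₂) = (z₁ - p₁) - (z₂ - p₂) := by abel
      rw [hrw, inner_sub_left]
      have h1' : inner (𝕜 := ℝ) (z₁ - p₁) (p₁ - p₂) = -inner (𝕜 := ℝ) (z₁ - p₁) (p₂ - p₁) := by
        rw [← inner_neg_right]; congr 1; abel
      linarith [h2, h1, h1'.le, h1'.ge]
    rw [inner_sub_left, real_inner_self_eq_norm_sq (p₁ - p₂)] at hsum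
    linarith
  rcases eq_or_lt_of_le (norm_nonneg (p₁ - p₂)) with h0 | h0
  · rw [← h0]; exact norm_nonneg _
  · have := key.trans (real_inner_le_norm (z₁ - z₂) (p₁ - p₂))
    rw [pow_two] at this
    exact le_of_mul_le_mul_right (by nlinarith) h0

lemma ballSmooth_integrable {n : ℕ} (hn : 0 < n) {δ : ℝ} {h : Euc n → ℝ}
    (hcont : Continuous h) (x : Euc n) :
    Integrable (fun w => h (x + δ • w)) (unifBall n) := by
  rw [unifBall]
  refine Integrable.smul_measure ?_ (ENNReal.inv_ne_top.mpr (vball_pos hn).ne')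
  exact ((hcont.comp (by fun_prop : Continuous fun w : Euc n => x + δ • w)).continuousOn).integrableOn_compact
    (isCompact_closedBall 0 1)

/-- with `Φ(x) = max_{y∈Y} f(x,y)`,
`Φ̃(x) = max_{y∈Y} (f(x,y) − (δε/(2 d_x D_y²))‖y − y₀‖²)` and their uniform-ball smoothings
`Φ_δ, Φ̃_δ`, both smoothings are differentiable and the gradient mappings satisfy
`‖G_X(x, ∇Φ_δ(x), η) − G_X(x, ∇Φ̃_δ(x), η)‖ ≤ ε/2` for all `x ∈ X` and `η > 0`. -/
theorem gradMap_regularized_smoothed_close (dx dy : ℕ) (hdx : 0 < dx) (hdy : 0 < dy)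
    (X : Set (Euc dx)) (hXne : X.Nonempty) (hXconv : Convex ℝ X) (hXcl : IsClosed X)
    (Y : Set (Euc dy)) (hYne : Y.Nonempty) (hYconv : Convex ℝ Y) (hYcpt : IsCompact Y)
    (Dy δ ε L : ℝ) (hDy : 0 < Dy) (hδ : 0 < δ) (hε : 0 < ε) (hL : 0 < L)
    (hdiam : ∀ y₁ ∈ Y, ∀ y₂ ∈ Y, ‖y₁ - y₂‖ ≤ Dy)
    (y₀ : Euc dy) (hy₀ : y₀ ∈ Y)
    (f : Euc dx → Euc dy → ℝ)
    (hlip : ∀ x₁ x₂ : Euc dx, ∀ y₁ ∈ Y, ∀ y₂ ∈ Y,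
      |f x₁ y₁ - f x₂ y₂| ≤ L * Real.sqrt (‖x₁ - x₂‖ ^ 2 + ‖y₁ - y₂‖ ^ 2))
    (projX : Euc dx → Euc dx)
    (hprojX : ∀ z, projX z ∈ X ∧ ∀ w ∈ X, ‖z - projX z‖ ≤ ‖z - w‖) :
    Differentiable ℝ (ballSmooth dx δ (primal Y f)) ∧
    Differentiable ℝ (ballSmooth dx δ
      (primal Y (fun x y => f x y - δ * ε / (2 * (dx : ℝ) * Dy ^ 2) * ‖y - y₀‖ ^ 2))) ∧
    ∀ x ∈ X, ∀ η : ℝ, 0 < η →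
      ‖gradMapX projX x (gradient (ballSmooth dx δ (primal Y f)) x) η -
        gradMapX projX x (gradient (ballSmooth dx δ
          (primal Y (fun x y => f x y - δ * ε / (2 * (dx : ℝ) * Dy ^ 2) * ‖y - y₀‖ ^ 2))) x) η‖
        ≤ ε / 2 := by
  have hdx0 : (0:ℝ) < dx := by exact_mod_cast hdx
  set r : ℝ := δ * ε / (2 * (dx : ℝ) * Dy ^ 2) with hrdef
  have hr0 : 0 ≤ r := by positivity
  set ft : Euc dx → Euc dy → ℝ := fun x y => f x y - r * ‖y - y₀‖ ^ 2 with hft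
  -- basic Lipschitz consequences
  have hylip : ∀ x : Euc dx, ∀ y₁ ∈ Y, ∀ y₂ ∈ Y, |f x y₁ - f x y₂| ≤ L * ‖y₁ - y₂‖ := by
    intro x y₁ h1 y₂ h2
    have h := hlip x x y₁ h1 y₂ h2
    simpa [Real.sqrt_sq (norm_nonneg _)] using h
  have hxlipf : ∀ x₁ x₂ : Euc dx, ∀ y ∈ Y, |f x₁ y - f x₂ y| ≤ L * ‖x₁ - x₂‖ := by
    intro x₁ x₂ y hy
    have h := hlip x₁ x₂ y hy y hy
    simpa [Real.sqrt_sq (norm_nonneg _)] using h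
  have hxlipft : ∀ x₁ x₂ : Euc dx, ∀ y ∈ Y, |ft x₁ y - ft x₂ y| ≤ L * ‖x₁ - x₂‖ := by
    intro x₁ x₂ y hy
    have heq : ft x₁ y - ft x₂ y = f x₁ y - f x₂ y := by simp only [hft]; ring
    rw [heq]; exact hxlipf x₁ x₂ y hy
  have hftlef : ∀ x y, ft x y ≤ f x y := by
    intro x y
    simp only [hft]
    nlinarith [sq_nonneg ‖y - y₀‖, mul_nonneg hr0 (sq_nonneg ‖y - y₀‖)]
  have hub : ∀ x : Euc dx, ∀ y ∈ Y, f x y ≤ f x y₀ + L * Dy := by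
    intro x y hy
    have h1 := (abs_le.mp (hylip x y hy y₀ hy₀)).2
    have h2 := hdiam y hy y₀ hy₀
    nlinarith [norm_nonneg (y - y₀)]
  have hbddf : ∀ x, BddAbove (f x '' Y) := by
    intro x
    refine ⟨f x y₀ + L * Dy, ?_⟩
    rintro a ⟨y, hy, rfl⟩
    exact hub x y hy
  have hbddft : ∀ x, BddAbove (ft x '' Y) := by
    intro x
    refine ⟨f x y₀ + L * Dy, ?_⟩
    rintro a ⟨y, hy, rfl⟩
    exact (hftlef x y).trans (hub x y hy)
  -- Lipschitz of primal functions
  have primal_lip : ∀ (g : Euc dx → Euc dy → ℝ), (∀ x, BddAbove (g x '' Y)) →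
      (∀ x₁ x₂ : Euc dx, ∀ y ∈ Y, |g x₁ y - g x₂ y| ≤ L * ‖x₁ - x₂‖) →
      LipschitzWith (Real.toNNReal L) (primal Y g) := by
    intro g hbdd hglip
    apply LipschitzWith.of_dist_le_mul
    intro x₁ x₂
    rw [Real.dist_eq, dist_eq_norm, Real.coe_toNNReal _ hL.le, abs_sub_le_iff]
    constructor
    · rw [sub_le_iff_le_add']
      refine primal_le_primal_add hYne (hbdd x₂) (fun y hy => ?_)
      have h := (abs_le.mp (hglip x₁ x₂ y hy)).2; linarith
    · rw [sub_le_iff_le_add']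
      have hnr : ‖x₂ - x₁‖ = ‖x₁ - x₂‖ := norm_sub_rev _ _
      refine primal_le_primal_add hYne (hbdd x₁) (fun y hy => ?_)
      have h := (abs_le.mp (hglip x₂ x₁ y hy)).2; rw [hnr] at h; linarith
  have hΦlip := primal_lip f hbddf hxlipf
  have hΨlip := primal_lip ft hbddft hxlipft
  -- sandwich bound
  have hsandwich : ∀ z : Euc dx, 0 ≤ primal Y f z - primal Y ft z ∧
      primal Y f z - primal Y ft z ≤ δ * ε / (2 * dx) := by
    intro z
    constructor
    · have h := primal_le_primal_add (g₁ := ft) (g₂ := f) (x₁ := z) (x₂ := z) hYne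
        (hbddf z) (K := 0) (fun y hy => by rw [add_zero]; exact hftlef z y)
      rw [add_zero] at h
      linarith
    · have hK : r * Dy ^ 2 = δ * ε / (2 * dx) := by
        rw [hrdef]; field_simp
      have h2 := primal_le_primal_add (g₁ := f) (g₂ := ft) (x₁ := z) (x₂ := z) hYne
        (hbddft z) (K := r * Dy ^ 2) (fun y hy => by
          have hd := hdiam y hy y₀ hy₀
          have hb : r * ‖y - y₀‖ ^ 2 ≤ r * Dy ^ 2 :=
            mul_le_mul_of_nonneg_left (pow_le_pow_left₀ (norm_nonneg _) hd 2) hr0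
          simp only [hft]; linarith)
      rw [hK] at h2
      linarith
  -- differentiability
  have hdu : Differentiable ℝ (ballSmooth dx δ (primal Y f)) :=
    fun x => (ballSmooth_hasFDerivAt hdx hδ hΦlip x).differentiableAt
  have hdv : Differentiable ℝ (ballSmooth dx δ (primal Y ft)) :=
    fun x => (ballSmooth_hasFDerivAt hdx hδ hΨlip x).differentiableAt
  refine ⟨hdu, hdv, ?_⟩
  intro x hx η hη
  set u := ballSmooth dx δ (primal Y f) with hu
  set v := ballSmooth dx δ (primal Y ft) with hv
  set g₁ := gradient u x with hg₁
  set g₂ := gradient v x with hg₂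
  -- gradient difference bound
  have hgd : ‖g₁ - g₂‖ ≤ ε / 2 := by
    have hDeq : ∀ z : Euc dx, u z - v z
        = ballSmooth dx δ (fun w => primal Y f w - primal Y ft w) z := by
      intro z
      rw [hu, hv, ballSmooth, ballSmooth, ballSmooth,
        ← integral_sub (ballSmooth_integrable hdx hΦlip.continuous z)
          (ballSmooth_integrable hdx hΨlip.continuous z)]
    have hDlip : ∀ z₁ z₂ : Euc dx, |(u z₁ - v z₁) - (u z₂ - v z₂)| ≤ ε / 2 * ‖z₁ - z₂‖ := by
      intro z₁ z₂
      rw [hDeq, hDeq]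
      have hb : ∀ z : Euc dx, |primal Y f z - primal Y ft z| ≤ δ * ε / (2 * dx) := fun z =>
        abs_le.mpr ⟨by linarith [(hsandwich z).1, (hsandwich z).2,
          (by positivity : (0:ℝ) ≤ δ * ε / (2 * dx))], (hsandwich z).2⟩
      have hbd := ballSmooth_dist_le hdx hδ (hΦlip.continuous.sub hΨlip.continuous)
          (by positivity : (0:ℝ) ≤ δ * ε / (2 * dx)) hb z₁ z₂
      have hcoef : (dx : ℝ) * (δ * ε / (2 * dx)) / δ = ε / 2 := by
        field_simp
      rw [hcoef] at hbd
      exact hbd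
    have hD : HasFDerivAt (fun z => u z - v z) (fderiv ℝ u x - fderiv ℝ v x) x :=
      ((hdu x).hasFDerivAt).sub ((hdv x).hasFDerivAt)
    have hnorm : ‖fderiv ℝ u x - fderiv ℝ v x‖ ≤ ε / 2 := by
      apply hD.le_of_lip' (by positivity)
      filter_upwards with z
      simpa [Real.norm_eq_abs] using hDlip z x
    have hgrw : g₁ - g₂ = (InnerProductSpace.toDual ℝ (Euc dx)).symm
        (fderiv ℝ u x - fderiv ℝ v x) := by
      rw [hg₁, hg₂, gradient, gradient, map_sub]
    rw [hgrw, LinearIsometryEquiv.norm_map]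
    exact hnorm
  -- projection nonexpansiveness
  have hkey : gradMapX projX x g₁ η - gradMapX projX x g₂ η
      = η⁻¹ • (projX (x - η • g₂) - projX (x - η • g₁)) := by
    rw [gradMapX, gradMapX, ← smul_sub]
    congr 1
    abel
  rw [hkey, norm_smul, Real.norm_eq_abs, abs_of_pos (inv_pos.mpr hη)]
  have hne := proj_nonexpansive hXconv projX hprojX (x - η • g₂) (x - η • g₁)
  have harg : (x - η • g₂) - (x - η • g₁) = η • (g₁ - g₂) := by module
  rw [harg, norm_smul, Real.norm_eq_abs, abs_of_pos hη] at hne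
  calc η⁻¹ * ‖projX (x - η • g₂) - projX (x - η • g₁)‖ ≤ η⁻¹ * (η * ‖g₁ - g₂‖) :=
        mul_le_mul_of_nonneg_left hne (inv_pos.mpr hη).le
    _ = ‖g₁ - g₂‖ := by field_simp
    _ ≤ ε / 2 := hgd
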